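/- Let M be an n×n complex matrix, 0 ≤ k ≤ n−1, and set m = n − ⌈k/2⌉. Denote the rows of M by R_1, ..., R_n, and for i ∈ [m] let R_{−i} = span{R_j : j ∈ [m], j ≠ i}. Then there is an absolute constant c > 0 such that s_{n−k}(M) ≥ c·√(k/n)·min_{i∈[m]} dist(R_i, R_{−i}). -/

import Mathlib

open Matrix ComplexOrder

noncomputable section SVAux
namespace SVAux
open Metric Submodule

local notation "⟪" x ", " y "⟫" => @inner ℂ _ _ x y

variable {n : ℕ}

def conjE {n : ℕ} (x : EuclideanSpace ℂ (Fin n)) : EuclideanSpace ℂ (Fin n) :=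
  WithLp.toLp 2 (fun i => starRingEnd ℂ (x i))

lemma conjE_conjE (x : EuclideanSpace ℂ (Fin n)) : conjE (conjE x) = x := by
  ext i; simp [conjE]

lemma conjE_add (x y : EuclideanSpace ℂ (Fin n)) : conjE (x + y) = conjE x + conjE y := by
  ext i; simp [conjE]

lemma conjE_smul (c : ℂ) (x : EuclideanSpace ℂ (Fin n)) :
    conjE (c • x) = (starRingEnd ℂ c) • conjE x := by
  ext i; simp [conjE]

lemma conjE_zero : conjE (0 : EuclideanSpace ℂ (Fin n)) = 0 := by
  ext i; simp [conjE]

lemma isometry_conjE : Isometry (conjE (n := n)) := by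
  apply Isometry.of_dist_eq
  intro x y
  rw [EuclideanSpace.dist_eq, EuclideanSpace.dist_eq]
  congr 1
  refine Finset.sum_congr rfl fun i _ => ?_
  rw [show dist (conjE x i) (conjE y i) = dist (x i) (y i) from Complex.dist_conj_conj (x i) (y i)]

lemma conjE_span_sub (A : Set (EuclideanSpace ℂ (Fin n))) :
    conjE '' (span ℂ A : Set _) ⊆ (span ℂ (conjE '' A) : Set (EuclideanSpace ℂ (Fin n))) := by
  rintro _ ⟨x, hx, rfl⟩
  induction hx using Submodule.span_induction with
  | mem y hy => exact subset_span ⟨y, hy, rfl⟩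
  | zero => rw [conjE_zero]; exact (span ℂ (conjE '' A)).zero_mem
  | add y z _ _ hy hz => rw [conjE_add]; exact (span ℂ (conjE '' A)).add_mem hy hz
  | smul c y _ hy => rw [conjE_smul]; exact (span ℂ (conjE '' A)).smul_mem _ hy

lemma conjE_span (A : Set (EuclideanSpace ℂ (Fin n))) :
    conjE '' (span ℂ A : Set _) = (span ℂ (conjE '' A) : Set (EuclideanSpace ℂ (Fin n))) := by
  refine subset_antisymm (conjE_span_sub A) ?_
  intro x hx
  have h2 := conjE_span_sub (conjE '' A) ⟨x, hx, rfl⟩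
  have himg : conjE '' (conjE '' A) = A := by
    ext y; constructor
    · rintro ⟨_, ⟨z, hz, rfl⟩, rfl⟩; rwa [conjE_conjE]
    · intro hy; exact ⟨conjE y, ⟨y, hy, rfl⟩, conjE_conjE y⟩
  rw [himg] at h2
  exact ⟨conjE x, h2, conjE_conjE x⟩

set_option maxHeartbeats 2000000 in
lemma core (m : ℕ) (hm : m ≤ n) (S : Fin n → EuclideanSpace ℂ (Fin n))
    (V : Submodule ℂ (EuclideanSpace ℂ (Fin n)))
    (s D : ℝ) (hD : 0 < D)
    (hdist : ∀ j : Fin n, (j : ℕ) < m →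
      D ≤ infDist (S j)
        (span ℂ (S '' {l : Fin n | (l : ℕ) < m ∧ l ≠ j}) : Set (EuclideanSpace ℂ (Fin n))))
    (hsV : ∀ v ∈ V, (∑ j, ‖⟪S j, v⟫‖ ^ 2) ≤ s ^ 2 * ‖v‖ ^ 2) :
    (Module.finrank ℂ ↥(V ⊓ span ℂ (S '' {l : Fin n | (l : ℕ) < m})) : ℝ) * D ^ 2
      ≤ (n : ℝ) * s ^ 2 := by
  classical
  set T : Submodule ℂ (EuclideanSpace ℂ (Fin n)) :=
    span ℂ (S '' {l : Fin n | (l : ℕ) < m}) with hT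
  set K : Fin n → Submodule ℂ (EuclideanSpace ℂ (Fin n)) :=
    fun j => span ℂ (S '' {l : Fin n | (l : ℕ) < m ∧ l ≠ j}) with hKdef
  set u : Fin n → EuclideanSpace ℂ (Fin n) :=
    fun j => S j - ↑(orthogonalProjection (K j) (S j)) with hu
  have hu_orth : ∀ j, u j ∈ (K j)ᗮ := fun j => sub_starProjection_mem_orthogonal _
  have huD : ∀ j : Fin n, (j : ℕ) < m → D ≤ ‖u j‖ := by
    intro j hj
    refine (hdist j hj).trans ?_
    have h1 : infDist (S j) (K j : Set (EuclideanSpace ℂ (Fin n)))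
        ≤ dist (S j) ↑(orthogonalProjection (K j) (S j)) :=
      infDist_le_dist_of_mem (Submodule.coe_mem _)
    rw [dist_eq_norm] at h1; exact h1
  have hu_ne : ∀ j : Fin n, (j : ℕ) < m → u j ≠ 0 := by
    intro j hj h0
    have := huD j hj
    rw [h0, norm_zero] at this
    linarith
  set w : Fin n → EuclideanSpace ℂ (Fin n) := fun j => (‖u j‖⁻¹ : ℂ) • u j with hw
  have hw_norm : ∀ j : Fin n, (j : ℕ) < m → ‖w j‖ = 1 := fun j hj =>
    norm_smul_inv_norm (hu_ne j hj)
  have hu_inner_other : ∀ j l : Fin n, (l : ℕ) < m → l ≠ j → ⟪u j, S l⟫ = 0 := by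
    intro j l hl hne
    exact (Submodule.mem_orthogonal' _ _).1 (hu_orth j) (S l) (subset_span ⟨l, ⟨hl, hne⟩, rfl⟩)
  have hu_inner_self : ∀ j : Fin n, ⟪u j, S j⟫ = ((‖u j‖ : ℂ)) ^ 2 := by
    intro j
    have hdecomp : S j = u j + ↑(orthogonalProjection (K j) (S j)) := by
      simp [hu]
    rw [hdecomp, inner_add_right, inner_self_eq_norm_sq_to_K,
      (Submodule.mem_orthogonal' _ _).1 (hu_orth j) _ (Submodule.coe_mem _), add_zero]
    norm_cast
  have hw_inner_other : ∀ j l : Fin n, (l : ℕ) < m → l ≠ j → ⟪w j, S l⟫ = 0 := by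
    intro j l hl hne
    rw [hw]
    simp only [inner_smul_left, hu_inner_other j l hl hne, mul_zero]
  have hw_inner_self : ∀ j : Fin n, (j : ℕ) < m → ⟪w j, S j⟫ = (‖u j‖ : ℂ) := by
    intro j hj
    have hne : (‖u j‖ : ℂ) ≠ 0 := by
      simpa using (hu_ne j hj)
    rw [hw]
    simp only [inner_smul_left, hu_inner_self j]
    rw [map_inv₀, Complex.conj_ofReal]
    field_simp
  have hw_mem_T : ∀ j : Fin n, (j : ℕ) < m → w j ∈ T := by
    intro j hj
    have hS : S j ∈ T := subset_span ⟨j, hj, rfl⟩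
    have hK_le : K j ≤ T := span_mono (Set.image_mono (fun l hl => hl.1))
    have hproj : (↑(orthogonalProjection (K j) (S j)) : EuclideanSpace ℂ (Fin n)) ∈ T :=
      hK_le (Submodule.coe_mem _)
    exact Submodule.smul_mem _ _ (Submodule.sub_mem _ hS hproj)
  set Filt : Finset (Fin n) := Finset.univ.filter (fun j : Fin n => (j : ℕ) < m) with hFilt
  have hmemFilt : ∀ j : Fin n, j ∈ Filt ↔ (j : ℕ) < m := by
    intro j; simp [hFilt]
  -- representation of elements of T
  have hrep : ∀ v ∈ T, v = ∑ j ∈ Filt, ((‖u j‖ : ℂ)⁻¹ * ⟪S j, v⟫) • w j := by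
    intro v hv
    set F : EuclideanSpace ℂ (Fin n) := ∑ j ∈ Filt, ((‖u j‖ : ℂ)⁻¹ * ⟪S j, v⟫) • w j with hF
    have hFT : F ∈ T := Submodule.sum_mem _ (fun j hj =>
      Submodule.smul_mem _ _ (hw_mem_T j ((hmemFilt j).1 hj)))
    have hSF : ∀ l : Fin n, (l : ℕ) < m → ⟪S l, v - F⟫ = 0 := by
      intro l hl
      rw [inner_sub_right]
      have hFl : ⟪S l, F⟫ = ⟪S l, v⟫ := by
        rw [hF, inner_sum]
        rw [Finset.sum_eq_single l]
        · rw [inner_smul_right]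
          have h1 : ⟪S l, w l⟫ = (‖u l‖ : ℂ) := by
            rw [← inner_conj_symm, hw_inner_self l hl, Complex.conj_ofReal]
          rw [h1]
          have hne : (‖u l‖ : ℂ) ≠ 0 := by simpa using (hu_ne l hl)
          field_simp
        · intro b _ hbl
          rw [inner_smul_right]
          have h0 : ⟪S l, w b⟫ = 0 := by
            rw [← inner_conj_symm, hw_inner_other b l hl (Ne.symm hbl), map_zero]
          rw [h0, mul_zero]
        · intro hnot
          exact absurd ((hmemFilt l).2 hl) hnot
      rw [hFl, sub_self]
    have hOrth : v - F ∈ Tᗮ := by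
      rw [Submodule.mem_orthogonal]
      intro x hx
      induction hx using Submodule.span_induction with
      | mem y hy =>
        obtain ⟨l, hl, rfl⟩ := hy
        exact hSF l hl
      | zero => exact inner_zero_left _
      | add y z _ _ hy hz => rw [inner_add_left, hy, hz, add_zero]
      | smul c y _ hy => rw [inner_smul_left, hy, mul_zero]
    have hvF : v - F ∈ T := Submodule.sub_mem _ hv hFT
    have h0 : v - F = 0 := by
      have := (Submodule.mem_orthogonal _ _).1 hOrth _ hvF
      exact inner_self_eq_zero.1 this
    exact sub_eq_zero.1 h0
  -- main computation
  set d : ℕ := Module.finrank ℂ ↥(V ⊓ T) with hd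
  set b := stdOrthonormalBasis ℂ ↥(V ⊓ T) with hb
  set e : Fin d → EuclideanSpace ℂ (Fin n) := fun t => ((b t : ↥(V ⊓ T)) : EuclideanSpace ℂ (Fin n)) with he
  have he_on : Orthonormal ℂ e :=
    b.orthonormal.comp_linearIsometry (V ⊓ T).subtypeₗᵢ
  have he_norm : ∀ t, ‖e t‖ = 1 := fun t => he_on.1 t
  have he_V : ∀ t, e t ∈ V := fun t => ((Submodule.mem_inf.1 (b t).2).1)
  have he_T : ∀ t, e t ∈ T := fun t => ((Submodule.mem_inf.1 (b t).2).2)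
  have key : ∀ t : Fin d, D ^ 2 ≤ s ^ 2 * ∑ j ∈ Filt, ‖⟪e t, w j⟫‖ ^ 2 := by
    intro t
    set A : ℝ := ∑ j ∈ Filt, ‖(‖u j‖ : ℂ)⁻¹ * ⟪S j, e t⟫‖ ^ 2 with hA
    set B : ℝ := ∑ j ∈ Filt, ‖⟪e t, w j⟫‖ ^ 2 with hB
    have hB0 : 0 ≤ B := Finset.sum_nonneg fun j _ => sq_nonneg _
    have h1 : (1 : ℝ) ≤ ∑ j ∈ Filt, ‖(‖u j‖ : ℂ)⁻¹ * ⟪S j, e t⟫‖ * ‖⟪e t, w j⟫‖ := by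
      have hee : ⟪e t, e t⟫ = ∑ j ∈ Filt, ((‖u j‖ : ℂ)⁻¹ * ⟪S j, e t⟫) * ⟪e t, w j⟫ := by
        have hrept := hrep _ (he_T t)
        have step1 : ⟪e t, e t⟫ = ⟪e t, ∑ j ∈ Filt, ((‖u j‖ : ℂ)⁻¹ * ⟪S j, e t⟫) • w j⟫ :=
          congrArg (fun z => (inner ℂ (e t) z : ℂ)) hrept
        rw [step1, inner_sum]
        refine Finset.sum_congr rfl fun j _ => ?_
        rw [inner_smul_right]
      have h2 : ‖⟪e t, e t⟫‖ = 1 := by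
        rw [inner_self_eq_norm_sq_to_K]
        simp [he_norm t]
      calc (1 : ℝ) = ‖⟪e t, e t⟫‖ := h2.symm
        _ = ‖∑ j ∈ Filt, ((‖u j‖ : ℂ)⁻¹ * ⟪S j, e t⟫) * ⟪e t, w j⟫‖ := by rw [hee]
        _ ≤ ∑ j ∈ Filt, ‖((‖u j‖ : ℂ)⁻¹ * ⟪S j, e t⟫) * ⟪e t, w j⟫‖ := norm_sum_le _ _
        _ = ∑ j ∈ Filt, ‖(‖u j‖ : ℂ)⁻¹ * ⟪S j, e t⟫‖ * ‖⟪e t, w j⟫‖ := by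
            refine Finset.sum_congr rfl fun j _ => ?_
            rw [norm_mul]
    have hcs := Finset.sum_mul_sq_le_sq_mul_sq Filt
      (fun j => ‖(‖u j‖ : ℂ)⁻¹ * ⟪S j, e t⟫‖) (fun j => ‖⟪e t, w j⟫‖)
    have h1AB : (1 : ℝ) ≤ A * B := by
      have hsq : (1:ℝ) ≤ (∑ j ∈ Filt, ‖(‖u j‖ : ℂ)⁻¹ * ⟪S j, e t⟫‖ * ‖⟪e t, w j⟫‖) ^ 2 := by
        nlinarith [h1]
      exact hsq.trans hcs
    have hDA : D ^ 2 * A ≤ s ^ 2 := by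
      have hterm : ∀ j ∈ Filt, D ^ 2 * ‖(‖u j‖ : ℂ)⁻¹ * ⟪S j, e t⟫‖ ^ 2 ≤ ‖⟪S j, e t⟫‖ ^ 2 := by
        intro j hj
        have hj' : (j : ℕ) < m := (hmemFilt j).1 hj
        have hnn : ‖(‖u j‖ : ℂ)⁻¹ * ⟪S j, e t⟫‖ = ‖u j‖⁻¹ * ‖⟪S j, e t⟫‖ := by
          rw [norm_mul]
          norm_num
        rw [hnn, mul_pow]
        have hupos : 0 < ‖u j‖ := lt_of_lt_of_le hD (huD j hj')
        have h3 : D ^ 2 * (‖u j‖⁻¹) ^ 2 ≤ 1 := by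
          rw [inv_pow]
          rw [mul_inv_le_iff₀ (by positivity)]
          nlinarith [huD j hj']
        calc D ^ 2 * ((‖u j‖⁻¹) ^ 2 * ‖⟪S j, e t⟫‖ ^ 2)
            = (D ^ 2 * (‖u j‖⁻¹) ^ 2) * ‖⟪S j, e t⟫‖ ^ 2 := by ring
          _ ≤ 1 * ‖⟪S j, e t⟫‖ ^ 2 := mul_le_mul_of_nonneg_right h3 (sq_nonneg _)
          _ = ‖⟪S j, e t⟫‖ ^ 2 := one_mul _
      calc D ^ 2 * A = ∑ j ∈ Filt, D ^ 2 * ‖(‖u j‖ : ℂ)⁻¹ * ⟪S j, e t⟫‖ ^ 2 := by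
            rw [hA, Finset.mul_sum]
        _ ≤ ∑ j ∈ Filt, ‖⟪S j, e t⟫‖ ^ 2 := Finset.sum_le_sum hterm
        _ ≤ ∑ j : Fin n, ‖⟪S j, e t⟫‖ ^ 2 :=
            Finset.sum_le_sum_of_subset_of_nonneg (Finset.subset_univ _)
              (fun j _ _ => sq_nonneg _)
        _ ≤ s ^ 2 * ‖e t‖ ^ 2 := hsV _ (he_V t)
        _ = s ^ 2 := by rw [he_norm t]; ring
    calc D ^ 2 = D ^ 2 * 1 := (mul_one _).symm
      _ ≤ D ^ 2 * (A * B) := mul_le_mul_of_nonneg_left h1AB (sq_nonneg _)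
      _ = (D ^ 2 * A) * B := by ring
      _ ≤ s ^ 2 * B := mul_le_mul_of_nonneg_right hDA hB0
  have hsum := Finset.sum_le_sum (fun t (_ : t ∈ (Finset.univ : Finset (Fin d))) => key t)
  have hlhs : ∑ _t : Fin d, D ^ 2 = (d : ℝ) * D ^ 2 := by
    rw [Finset.sum_const, Finset.card_univ, Fintype.card_fin, nsmul_eq_mul]
  have hrhs : ∑ t : Fin d, s ^ 2 * ∑ j ∈ Filt, ‖⟪e t, w j⟫‖ ^ 2 ≤ (n : ℝ) * s ^ 2 := by
    have hswap : ∑ t : Fin d, ∑ j ∈ Filt, ‖⟪e t, w j⟫‖ ^ 2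
        = ∑ j ∈ Filt, ∑ t : Fin d, ‖⟪e t, w j⟫‖ ^ 2 := Finset.sum_comm
    have hBessel : ∀ j ∈ Filt, (∑ t : Fin d, ‖⟪e t, w j⟫‖ ^ 2) ≤ 1 := by
      intro j hj
      have h := he_on.sum_inner_products_le (w j) (s := Finset.univ)
      rw [hw_norm j ((hmemFilt j).1 hj)] at h
      simpa using h
    calc ∑ t : Fin d, s ^ 2 * ∑ j ∈ Filt, ‖⟪e t, w j⟫‖ ^ 2
        = s ^ 2 * ∑ j ∈ Filt, ∑ t : Fin d, ‖⟪e t, w j⟫‖ ^ 2 := by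
          rw [← Finset.mul_sum, hswap]
      _ ≤ s ^ 2 * (Filt.card : ℝ) := by
          refine mul_le_mul_of_nonneg_left ?_ (sq_nonneg _)
          calc ∑ j ∈ Filt, ∑ t : Fin d, ‖⟪e t, w j⟫‖ ^ 2
              ≤ ∑ _j ∈ Filt, (1 : ℝ) := Finset.sum_le_sum hBessel
            _ = (Filt.card : ℝ) := by rw [Finset.sum_const]; simp
      _ ≤ (n : ℝ) * s ^ 2 := by
          have hc : (Filt.card : ℝ) ≤ (n : ℝ) := by
            have := Finset.card_le_univ Filt
            have h2 : Filt.card ≤ n := by simpa using this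
            exact_mod_cast h2
          nlinarith [sq_nonneg s]
  calc (d : ℝ) * D ^ 2 = ∑ _t : Fin d, D ^ 2 := hlhs.symm
    _ ≤ ∑ t : Fin d, s ^ 2 * ∑ j ∈ Filt, ‖⟪e t, w j⟫‖ ^ 2 := hsum
    _ ≤ (n : ℝ) * s ^ 2 := hrhs

lemma conj_mul_self (z : ℂ) : (starRingEnd ℂ) z * z = ((‖z‖ ^ 2 : ℝ) : ℂ) := by
  rw [mul_comm, Complex.mul_conj, Complex.normSq_eq_norm_sq]

set_option maxHeartbeats 1000000 in
lemma eigen_bound (M : Matrix (Fin n) (Fin n) ℂ) (hA : (Mᴴ * M).IsHermitian) (sv : ℝ)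
    (J : Finset (Fin n)) (hJ : ∀ j ∈ J, hA.eigenvalues j ≤ sv ^ 2) :
    ∃ V : Submodule ℂ (EuclideanSpace ℂ (Fin n)),
      Module.finrank ℂ ↥V = J.card ∧
      ∀ v ∈ V, (∑ i, ‖(M *ᵥ (v : Fin n → ℂ)) i‖ ^ 2) ≤ sv ^ 2 * ‖v‖ ^ 2 := by
  classical
  set g : J → EuclideanSpace ℂ (Fin n) := fun j => hA.eigenvectorBasis j.1 with hg
  have hg_on : Orthonormal ℂ g :=
    hA.eigenvectorBasis.orthonormal.comp _ Subtype.val_injective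
  refine ⟨span ℂ (Set.range g), ?_, ?_⟩
  · rw [finrank_span_eq_card hg_on.linearIndependent]
    simp
  · intro v hv
    obtain ⟨c, hc⟩ := (mem_span_range_iff_exists_fun ℂ).1 hv
    -- A *ᵥ v
    have hAv : (Mᴴ * M) *ᵥ (v : Fin n → ℂ)
        = ∑ j : J, (c j * (hA.eigenvalues j.1 : ℂ)) • (g j : Fin n → ℂ) := by
      have hv' : (v : Fin n → ℂ) = ∑ j : J, c j • (g j : Fin n → ℂ) := by
        rw [← hc]; simp
      rw [hv', ← Matrix.mulVecLin_apply, map_sum]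
      refine Finset.sum_congr rfl fun j _ => ?_
      have hgj : (g j : Fin n → ℂ) = ⇑(hA.eigenvectorBasis j.1) := rfl
      rw [_root_.map_smul, Matrix.mulVecLin_apply, hgj, hA.mulVec_eigenvectorBasis]
      ext i
      simp only [PiLp.smul_apply, Pi.smul_apply, smul_eq_mul, Complex.real_smul]
      ring
  -- inner products
    have hinner1 : (inner ℂ v ((WithLp.equiv 2 (Fin n → ℂ)).symm ((Mᴴ * M) *ᵥ (v : Fin n → ℂ))) : ℂ)
        = ∑ j : J, (starRingEnd ℂ) (c j) * (c j * (hA.eigenvalues j.1 : ℂ)) := by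
      have hv' : v = ∑ j : J, c j • g j := hc.symm
      have hAv' : (WithLp.equiv 2 (Fin n → ℂ)).symm ((Mᴴ * M) *ᵥ (v : Fin n → ℂ))
          = ∑ j : J, (c j * (hA.eigenvalues j.1 : ℂ)) • g j := by
        rw [hAv]
        ext i
        simp [WithLp.equiv_symm_apply, PiLp.toLp_apply, g]
      rw [hAv', hv']
      exact hg_on.inner_sum c (fun j => c j * (hA.eigenvalues j.1 : ℂ)) Finset.univ
    have hinner2 : (inner ℂ v ((WithLp.equiv 2 (Fin n → ℂ)).symm ((Mᴴ * M) *ᵥ (v : Fin n → ℂ))) : ℂ)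
        = ∑ i, ((‖(M *ᵥ (v : Fin n → ℂ)) i‖ : ℂ)) ^ 2 := by
      rw [PiLp.inner_apply]
      have hdot : ∀ i, ((WithLp.equiv 2 (Fin n → ℂ)).symm ((Mᴴ * M) *ᵥ (v : Fin n → ℂ))) i
          = ((Mᴴ * M) *ᵥ (v : Fin n → ℂ)) i := fun i => rfl
      have : ∑ i, (starRingEnd ℂ) (v i) * ((Mᴴ * M) *ᵥ (v : Fin n → ℂ)) i
          = star (v : Fin n → ℂ) ⬝ᵥ ((Mᴴ * M) *ᵥ (v : Fin n → ℂ)) := rfl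
      calc ∑ i, (inner ℂ (v i) (((WithLp.equiv 2 (Fin n → ℂ)).symm ((Mᴴ * M) *ᵥ (v : Fin n → ℂ))) i) : ℂ)
          = star (v : Fin n → ℂ) ⬝ᵥ ((Mᴴ * M) *ᵥ (v : Fin n → ℂ)) := by
            rw [← this]
            refine Finset.sum_congr rfl fun i _ => ?_
            rw [hdot i]
            simp only [RCLike.inner_apply]; ring
        _ = star (M *ᵥ (v : Fin n → ℂ)) ⬝ᵥ (M *ᵥ (v : Fin n → ℂ)) := by
            rw [← Matrix.mulVec_mulVec, Matrix.dotProduct_mulVec, Matrix.star_mulVec]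
        _ = ∑ i, ((‖(M *ᵥ (v : Fin n → ℂ)) i‖ : ℂ)) ^ 2 := by
            refine Finset.sum_congr rfl fun i _ => ?_
            rw [← Complex.ofReal_pow]
            exact conj_mul_self _
    -- put together
    have hsum_eq : ((∑ i, ‖(M *ᵥ (v : Fin n → ℂ)) i‖ ^ 2 : ℝ) : ℂ)
        = ∑ j : J, ((‖c j‖ ^ 2 * hA.eigenvalues j.1 : ℝ) : ℂ) := by
      push_cast
      rw [← hinner2, hinner1]
      refine Finset.sum_congr rfl fun j _ => ?_
      rw [← mul_assoc, conj_mul_self]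
      push_cast
      ring
    have hreal : (∑ i, ‖(M *ᵥ (v : Fin n → ℂ)) i‖ ^ 2 : ℝ)
        = ∑ j : J, ‖c j‖ ^ 2 * hA.eigenvalues j.1 := by
      have := hsum_eq
      rw [← Complex.ofReal_sum] at this
      exact_mod_cast this
    have hnorm : ‖v‖ ^ 2 = ∑ j : J, ‖c j‖ ^ 2 := by
      have h1 : (inner ℂ v v : ℂ) = ∑ j : J, (starRingEnd ℂ) (c j) * c j := by
        conv_lhs => rw [← hc]
        exact hg_on.inner_sum c c Finset.univ
      have h2 : (inner ℂ v v : ℂ) = ((‖v‖ : ℂ)) ^ 2 := inner_self_eq_norm_sq_to_K v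
      have h3 : ((‖v‖ ^ 2 : ℝ) : ℂ) = ((∑ j : J, ‖c j‖ ^ 2 : ℝ) : ℂ) := by
        push_cast
        rw [← h2, h1]
        refine Finset.sum_congr rfl fun j _ => ?_
        rw [conj_mul_self]
        push_cast
        ring
      exact_mod_cast h3
    rw [hreal, hnorm, Finset.mul_sum]
    refine Finset.sum_le_sum fun j _ => ?_
    have := hJ j.1 j.2
    nlinarith [sq_nonneg ‖c j‖]

set_option maxHeartbeats 1000000 in
lemma inner_conjE_row (M : Matrix (Fin n) (Fin n) ℂ) (v : EuclideanSpace ℂ (Fin n)) (j : Fin n) :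
    (inner ℂ (conjE ((WithLp.equiv 2 (Fin n → ℂ)).symm (M j))) v : ℂ)
      = (M *ᵥ (v : Fin n → ℂ)) j := by
  rw [PiLp.inner_apply]
  simp only [conjE, WithLp.equiv_symm_apply, PiLp.toLp_apply, RCLike.inner_apply, starRingEnd_self_apply]
  show _ = ∑ i, M j i * v i
  exact Finset.sum_congr rfl fun i _ => mul_comm _ _

end SVAux
end SVAux


set_option maxHeartbeats 2000000 in
/-- For an `n × n` complex matrix `M`, `0 ≤ k ≤ n−1` and `m = n − ⌈k/2⌉`, the singular value
`s_{n−k}(M)` is at least `c·√(k/n)` times the minimum over `i ∈ [m]` of the distance from the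
`i`-th row to the span of the other rows `R_j`, `j ∈ [m] \ {i}`, for an absolute constant
`c > 0`. -/
theorem singularValue_lower_bound_dist_rows :
    ∃ c : ℝ, 0 < c ∧
      ∀ (n k : ℕ) (hn : 0 < n) (hk : k ≤ n - 1),
        ∀ (M : Matrix (Fin n) (Fin n) ℂ) (row : Fin n → EuclideanSpace ℂ (Fin n)),
          (∀ i, row i = (WithLp.equiv 2 (Fin n → ℂ)).symm (M i)) →
          ∀ (s : Fin n → ℝ) (σ : Equiv.Perm (Fin n)),
            Antitone s →
            (∀ i, s i =
              Real.sqrt ((Matrix.posSemidef_conjTranspose_mul_self M).1.eigenvalues (σ i))) →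
            c * Real.sqrt ((k : ℝ) / n) *
                (⨅ i : {i : Fin n // (i : ℕ) < n - (k + 1) / 2},
                  Metric.infDist (row i.1)
                    (Submodule.span ℂ
                        (row '' {j | (j : ℕ) < n - (k + 1) / 2 ∧ j ≠ i.1}) :
                      Set (EuclideanSpace ℂ (Fin n)))) ≤
              s ⟨n - 1 - k, by omega⟩ := by
  classical
  refine ⟨1/2, by norm_num, ?_⟩
  intro n k hn hk M row hrow s σ hanti hs
  have hkn : k + 1 ≤ n := by omega
  set m := n - (k + 1) / 2 with hm
  have hm_le : m ≤ n := Nat.sub_le _ _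
  have hm_pos : 0 < m := by omega
  set sval := s ⟨n - 1 - k, by omega⟩ with hsval
  have hsval0 : 0 ≤ sval := by rw [hsval, hs]; exact Real.sqrt_nonneg _
  have hne : Nonempty {i : Fin n // (i : ℕ) < m} := ⟨⟨⟨0, hn⟩, by simpa using hm_pos⟩⟩
  set D := ⨅ i : {i : Fin n // (i : ℕ) < m}, Metric.infDist (row i.1)
      (Submodule.span ℂ (row '' {j | (j : ℕ) < m ∧ j ≠ i.1}) :
        Set (EuclideanSpace ℂ (Fin n))) with hD
  have hD0 : 0 ≤ D := le_ciInf fun i => Metric.infDist_nonneg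
  rcases le_or_gt D 0 with hDle | hDpos
  · calc 1/2 * Real.sqrt ((k:ℝ)/n) * D ≤ 0 :=
        mul_nonpos_of_nonneg_of_nonpos (by positivity) hDle
      _ ≤ sval := hsval0
  have hA := (Matrix.posSemidef_conjTranspose_mul_self M).1
  -- eigen index set
  set f : Fin (k+1) → Fin n := fun t => σ ⟨n - 1 - k + t.1, by omega⟩ with hf
  have hfinj : Function.Injective f := by
    intro a b hab
    have := σ.injective hab
    rw [Fin.mk.injEq] at this
    exact Fin.ext (by omega)
  set J : Finset (Fin n) := Finset.image f Finset.univ with hJ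
  have hJcard : J.card = k + 1 := by
    rw [hJ, Finset.card_image_of_injective _ hfinj, Finset.card_univ, Fintype.card_fin]
  have hJle : ∀ j ∈ J, ((Matrix.posSemidef_conjTranspose_mul_self M).1).eigenvalues j ≤ sval ^ 2 := by
    intro j hj
    obtain ⟨t, _, rfl⟩ := Finset.mem_image.1 hj
    have h1 : s ⟨n - 1 - k + t.1, by omega⟩ ≤ sval := by
      rw [hsval]
      exact hanti (Fin.mk_le_mk.2 (Nat.le_add_right _ _))
    have h2 : Real.sqrt (((Matrix.posSemidef_conjTranspose_mul_self M).1).eigenvalues (f t)) ≤ sval := by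
      rw [← hs]; exact h1
    have h3 : 0 ≤ ((Matrix.posSemidef_conjTranspose_mul_self M).1).eigenvalues (f t) :=
      (Matrix.posSemidef_conjTranspose_mul_self M).eigenvalues_nonneg _
    calc ((Matrix.posSemidef_conjTranspose_mul_self M).1).eigenvalues (f t)
        = (Real.sqrt (((Matrix.posSemidef_conjTranspose_mul_self M).1).eigenvalues (f t))) ^ 2 :=
          (Real.sq_sqrt h3).symm
      _ ≤ sval ^ 2 := pow_le_pow_left₀ (Real.sqrt_nonneg _) h2 2
  obtain ⟨V, hVrank, hVbound⟩ :=
    SVAux.eigen_bound M (Matrix.posSemidef_conjTranspose_mul_self M).1 sval J hJle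
  set S : Fin n → EuclideanSpace ℂ (Fin n) := fun j => SVAux.conjE (row j) with hS
  have hinner : ∀ (j : Fin n) (v : EuclideanSpace ℂ (Fin n)),
      (inner ℂ (S j) v : ℂ) = (M *ᵥ (v : Fin n → ℂ)) j := by
    intro j v
    rw [hS]
    simp only
    rw [hrow j]
    exact SVAux.inner_conjE_row M v j
  have hsVcore : ∀ v ∈ V, (∑ j, ‖(inner ℂ (S j) v : ℂ)‖ ^ 2) ≤ sval ^ 2 * ‖v‖ ^ 2 := by
    intro v hv
    refine le_trans (le_of_eq (Finset.sum_congr rfl fun j _ => by rw [hinner j v])) (hVbound v hv)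
  -- distances transfer
  have hbdd : BddBelow (Set.range fun i : {i : Fin n // (i : ℕ) < m} =>
      Metric.infDist (row i.1)
        (Submodule.span ℂ (row '' {j | (j : ℕ) < m ∧ j ≠ i.1}) :
          Set (EuclideanSpace ℂ (Fin n)))) := by
    refine ⟨0, ?_⟩
    rintro x ⟨i, rfl⟩
    exact Metric.infDist_nonneg
  have hdist' : ∀ j : Fin n, (j : ℕ) < m → D ≤ Metric.infDist (S j)
      (Submodule.span ℂ (S '' {l : Fin n | (l : ℕ) < m ∧ l ≠ j}) :
        Set (EuclideanSpace ℂ (Fin n))) := by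
    intro j hj
    have h1 : D ≤ Metric.infDist (row j)
        (Submodule.span ℂ (row '' {l : Fin n | (l : ℕ) < m ∧ l ≠ j}) :
          Set (EuclideanSpace ℂ (Fin n))) := ciInf_le hbdd ⟨j, hj⟩
    have himg : S '' {l : Fin n | (l : ℕ) < m ∧ l ≠ j}
        = SVAux.conjE '' (row '' {l : Fin n | (l : ℕ) < m ∧ l ≠ j}) := by
      rw [← Set.image_comp]
      rfl
    have hspan : (Submodule.span ℂ (S '' {l : Fin n | (l : ℕ) < m ∧ l ≠ j}) :
          Set (EuclideanSpace ℂ (Fin n)))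
        = SVAux.conjE '' (Submodule.span ℂ (row '' {l : Fin n | (l : ℕ) < m ∧ l ≠ j}) :
          Set (EuclideanSpace ℂ (Fin n))) := by
      rw [himg, SVAux.conjE_span]
    rw [hspan, hS]
    simp only
    rw [Metric.infDist_image SVAux.isometry_conjE]
    exact h1
  have hcore := SVAux.core m hm_le S V sval D hDpos hdist' hsVcore
  -- dimension count
  set T : Submodule ℂ (EuclideanSpace ℂ (Fin n)) :=
    Submodule.span ℂ (S '' {l : Fin n | (l : ℕ) < m}) with hT
  have hind : LinearIndependent ℂ (fun l : {l : Fin n // (l : ℕ) < m} => S l.1) := by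
    rw [linearIndependent_iff']
    intro t g hsum i hi
    by_contra hgi
    have hmem : S i.1 ∈ Submodule.span ℂ (S '' {l : Fin n | (l : ℕ) < m ∧ l ≠ i.1}) := by
      have h1 : g i • S i.1 = - ∑ l ∈ t.erase i, g l • S l.1 := by
        have h2 := Finset.sum_erase_add t (fun l => g l • S l.1) hi
        rw [hsum] at h2
        linear_combination (norm := module) h2
      have h3 : S i.1 = (g i)⁻¹ • (g i • S i.1) := (inv_smul_smul₀ hgi _).symm
      rw [h3, h1]
      refine Submodule.smul_mem _ _ (Submodule.neg_mem _
        (Submodule.sum_mem _ fun l hl => ?_))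
      refine Submodule.smul_mem _ _ (Submodule.subset_span ?_)
      exact ⟨l.1, ⟨l.2, fun hll => (Finset.ne_of_mem_erase hl) (Subtype.ext hll)⟩, rfl⟩
    have h0 := hdist' i.1 i.2
    rw [Metric.infDist_zero_of_mem hmem] at h0
    linarith
  have hcard : Fintype.card {l : Fin n // (l : ℕ) < m} = m := by
    have e : {l : Fin n // (l : ℕ) < m} ≃ Fin m :=
      { toFun := fun x => ⟨x.1.1, x.2⟩
        invFun := fun y => ⟨⟨y.1, lt_of_lt_of_le y.2 hm_le⟩, y.2⟩
        left_inv := fun x => Subtype.ext (Fin.ext rfl)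
        right_inv := fun y => rfl }
    rw [Fintype.card_congr e, Fintype.card_fin]
  have hTrank : m ≤ Module.finrank ℂ ↥T := by
    have hind' : LinearIndependent ℂ
        (fun l : {l : Fin n // (l : ℕ) < m} =>
          (⟨S l.1, Submodule.subset_span ⟨l.1, l.2, rfl⟩⟩ : ↥T)) :=
      LinearIndependent.of_comp T.subtype hind
    have h := hind'.fintype_card_le_finrank
    rwa [hcard] at h
  have hsupinf := Submodule.finrank_sup_add_finrank_inf_eq V T
  have hsup_le : Module.finrank ℂ ↥(V ⊔ T) ≤ n := by
    have h2 := Submodule.finrank_le (V ⊔ T)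
    rwa [finrank_euclideanSpace_fin] at h2
  have hfr : (k + 1) - (k + 1) / 2 ≤ Module.finrank ℂ ↥(V ⊓ T) := by
    rw [hVrank, hJcard] at hsupinf
    omega
  -- final arithmetic
  have hkD : (k : ℝ) * D ^ 2 ≤ 2 * n * sval ^ 2 := by
    have hd2 : (k : ℝ) ≤ 2 * ((k + 1 : ℕ) - (k + 1) / 2 : ℕ) := by
      have : k ≤ 2 * ((k + 1) - (k + 1) / 2) := by omega
      exact_mod_cast this
    have hmono : ((k + 1) - (k + 1) / 2 : ℕ) * D ^ 2
        ≤ (Module.finrank ℂ ↥(V ⊓ T) : ℝ) * D ^ 2 := by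
      apply mul_le_mul_of_nonneg_right _ (sq_nonneg _)
      exact_mod_cast hfr
    nlinarith [hcore, sq_nonneg D]
  have hnpos : (0 : ℝ) < n := by exact_mod_cast hn
  have hsq : (1/2 * Real.sqrt ((k : ℝ)/n) * D) ^ 2 ≤ sval ^ 2 := by
    have h1 : (1/2 * Real.sqrt ((k : ℝ)/n) * D) ^ 2
        = 1/4 * ((k : ℝ)/n) * D ^ 2 := by
      rw [mul_pow, mul_pow, Real.sq_sqrt (by positivity)]
      ring
    rw [h1]
    have h2 : 1/4 * ((k : ℝ)/n) * D ^ 2 = ((k : ℝ) * D ^ 2) / (4 * n) := by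
      field_simp
    rw [h2, div_le_iff₀ (by positivity)]
    nlinarith [hkD, sq_nonneg sval, mul_nonneg (sq_nonneg sval) (le_of_lt hnpos)]
  have hlhs0 : 0 ≤ 1/2 * Real.sqrt ((k : ℝ)/n) * D := by positivity
  calc 1/2 * Real.sqrt ((k : ℝ)/n) * D
      = Real.sqrt ((1/2 * Real.sqrt ((k : ℝ)/n) * D) ^ 2) := (Real.sqrt_sq hlhs0).symm
    _ ≤ Real.sqrt (sval ^ 2) := Real.sqrt_le_sqrt hsq
    _ = sval := Real.sqrt_sq hsval0
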